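/- Let n ≥ 2, ε > 0 and let p > 1 be a real number. Suppose u is a real-valued function of (x,t) which at a given point is twice differentiable in x, differentiable in t, has a symmetric spatial Hessian, and satisfies u_t = Δu + (p − 2)·Δ∞u / (|Du|² + ε) at that point. Then at that point: [ n/2 + (p−2) − ((n−2)/2)(p−2)² ]·|D²u|² + (n/2)·(u_t)² ≤ [ n/2 + (p−2) + (1/2)(p−2)² ]·( |D²u|² − (Δu)² ) + (ε/2)(p−2)²·( (Δu)² − |D²u|² )/(|Du|²+ε) + (p−2+n)·Δu·u_t. -/

import Mathlib

open MeasureTheory Real Set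

/-- partial derivative in the `i`-th coordinate direction -/
noncomputable def pd {n : ℕ} (f : (Fin n → ℝ) → ℝ) (i : Fin n) (x : Fin n → ℝ) : ℝ :=
  fderiv ℝ f x (Pi.single i 1)

/-- Hessian entry `∂_i ∂_j f` -/
noncomputable def hess {n : ℕ} (f : (Fin n → ℝ) → ℝ) (i j : Fin n) (x : Fin n → ℝ) : ℝ :=
  pd (pd f j) i x

/-- squared Euclidean norm of the gradient `|Df|²` -/
noncomputable def gradSq {n : ℕ} (f : (Fin n → ℝ) → ℝ) (x : Fin n → ℝ) : ℝ :=
  ∑ i, (pd f i x) ^ 2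

/-- Laplacian `Δf = tr D²f` -/
noncomputable def lap {n : ℕ} (f : (Fin n → ℝ) → ℝ) (x : Fin n → ℝ) : ℝ :=
  ∑ i, hess f i i x

/-- ∞-Laplacian `Δ∞f = ⟨D²f·Df, Df⟩` -/
noncomputable def infLap {n : ℕ} (f : (Fin n → ℝ) → ℝ) (x : Fin n → ℝ) : ℝ :=
  ∑ i, ∑ j, hess f i j x * pd f j x * pd f i x

/-- squared Frobenius norm of the Hessian `|D²f|²` -/
noncomputable def hessSq {n : ℕ} (f : (Fin n → ℝ) → ℝ) (x : Fin n → ℝ) : ℝ :=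
  ∑ i, ∑ j, (hess f i j x) ^ 2

/-- squared Euclidean norm `|D²f·Df|²` -/
noncomputable def hessGradSq {n : ℕ} (f : (Fin n → ℝ) → ℝ) (x : Fin n → ℝ) : ℝ :=
  ∑ i, (∑ j, hess f i j x * pd f j x) ^ 2

/-- time derivative `u_t` of a function `u(x,t)` -/
noncomputable def tderiv {n : ℕ} (u : (Fin n → ℝ) → ℝ → ℝ) (x : Fin n → ℝ) (t : ℝ) : ℝ :=
  deriv (u x) t

open Finset

set_option maxHeartbeats 1000000 in
lemma key_pure {n : ℕ} (hn : 2 ≤ n) (A : Fin n → Fin n → ℝ) (q : Fin n → ℝ)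
    (hsym : ∀ i j, A i j = A j i) (s : ℝ) (hs : (∑ i, (q i)^2) ≤ s) :
    (n : ℝ) * (∑ i, ∑ j, A i j * q j * q i) ^ 2 ≤
      ((n : ℝ) - 2) * (∑ i, ∑ j, (A i j)^2) * s^2
        + 2 * (∑ i, A i i) * (∑ i, ∑ j, A i j * q j * q i) * s
        + (∑ i, (q i)^2) * s * ((∑ i, ∑ j, (A i j)^2) - (∑ i, A i i)^2) := by
  have hn' : (2:ℝ) ≤ (n:ℝ) := by exact_mod_cast hn
  set w : Fin n → ℝ := fun i => ∑ j, A i j * q j with hw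
  have hwA : ∀ i, ∑ j, A i j * q j = w i := fun i => by rw [hw]
  have hwA' : ∀ j, ∑ i, A i j * q i = w j := by
    intro j
    rw [hw]
    show ∑ i, A i j * q i = ∑ i, A j i * q i
    exact Finset.sum_congr rfl fun i _ => by rw [hsym i j]
  set G := ∑ i, (q i)^2 with hG
  set H := ∑ i, ∑ j, (A i j)^2 with hH
  set L := ∑ i, A i i with hL
  set II := ∑ i, ∑ j, A i j * q j * q i with hII
  set B := ∑ i, (w i)^2 with hB
  have hIw : II = ∑ i, w i * q i := by
    rw [hII]
    exact Finset.sum_congr rfl fun i _ => by rw [← Finset.sum_mul, hwA i]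
  have hG0 : 0 ≤ G := Finset.sum_nonneg fun i _ => sq_nonneg _
  have hH0 : 0 ≤ H := Finset.sum_nonneg fun i _ => Finset.sum_nonneg fun j _ => sq_nonneg _
  have hB0 : 0 ≤ B := Finset.sum_nonneg fun i _ => sq_nonneg _
  rcases eq_or_lt_of_le hG0 with hGz | hGpos
  · have hq : ∀ i, q i = 0 := by
      intro i
      have h0 := (Finset.sum_eq_zero_iff_of_nonneg (fun i _ => sq_nonneg (q i))).mp hGz.symm i
        (Finset.mem_univ i)
      exact (pow_eq_zero_iff two_ne_zero).mp h0
    have hIz : II = 0 := by rw [hIw]; simp [hq]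
    rw [hIz, ← hGz]
    have hs0 : 0 ≤ s := le_trans hGz.le hs
    nlinarith [mul_nonneg (mul_nonneg (by linarith : (0:ℝ) ≤ (n:ℝ)-2) hH0) (sq_nonneg s)]
  · have hspos : 0 < s := lt_of_lt_of_le hGpos hs
    have hG2 : (0:ℝ) < G^2 := by positivity
    have f1 : II^2 ≤ B * G := by
      rw [hIw, hB, hG]; exact Finset.sum_mul_sq_le_sq_mul_sq _ _ _
    have f2 : B ≤ H * G := by
      have hrow : ∀ i, (w i)^2 ≤ (∑ j, (A i j)^2) * G := by
        intro i
        rw [← hwA i, hG]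
        exact Finset.sum_mul_sq_le_sq_mul_sq _ _ _
      calc B = ∑ i, (w i)^2 := hB
        _ ≤ ∑ i, (∑ j, (A i j)^2) * G := Finset.sum_le_sum fun i _ => hrow i
        _ = H * G := by rw [hH, Finset.sum_mul]
    set M : Fin n → Fin n → ℝ :=
      fun i j => G^2 * A i j - G*(q i * w j) - G*(w i * q j) + II*(q i * q j) with hM
    have hMval : ∀ i j, M i j = G^2 * A i j - G*(q i * w j) - G*(w i * q j) + II*(q i * q j) :=
      fun i j => by rw [hM]
    have hMq : ∀ i, ∑ j, M i j * q j = 0 := by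
      intro i
      have step : ∑ j, M i j * q j
          = ∑ j, (G^2 * (A i j * q j) + (-(G * q i)) * (w j * q j)
              + (II * q i - G * w i) * (q j)^2) :=
        Finset.sum_congr rfl fun j _ => by rw [hMval]; ring
      rw [step, Finset.sum_add_distrib, Finset.sum_add_distrib,
        ← Finset.mul_sum, ← Finset.mul_sum, ← Finset.mul_sum, hwA i, ← hIw, ← hG]
      ring
    set τ := ∑ i, M i i with hτs
    have hτ : τ = G^2*L - G*II := by
      have step : ∑ i, M i i
          = ∑ i, (G^2 * A i i + (-(2*G))*(w i * q i) + II*(q i)^2) :=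
        Finset.sum_congr rfl fun i _ => by rw [hMval]; ring
      rw [hτs, step, Finset.sum_add_distrib, Finset.sum_add_distrib,
        ← Finset.mul_sum, ← Finset.mul_sum, ← Finset.mul_sum, ← hL, ← hIw, ← hG]
      ring
    set Msq := ∑ i, ∑ j, (M i j)^2 with hMsqdef
    have hMsq0 : 0 ≤ Msq := Finset.sum_nonneg fun i _ => Finset.sum_nonneg fun j _ => sq_nonneg _
    have inner1 : ∀ i, ∑ j, (M i j)^2 =
        G^4*(∑ j, (A i j)^2) + (G^2*(q i)^2)*B + ((G*w i - II*q i)^2)*G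
        + (-(2*G^3*(q i)))*(∑ j, A i j * w j)
        + (-(2*G^2*(G*w i - II*q i)))*(w i)
        + (2*G*(q i)*(G*w i - II*q i))*II := by
      intro i
      have step : ∑ j, (M i j)^2
          = ∑ j, (G^4*(A i j)^2 + (G^2*(q i)^2)*(w j)^2 + ((G*w i - II*q i)^2)*(q j)^2
              + (-(2*G^3*(q i)))*(A i j * w j) + (-(2*G^2*(G*w i - II*q i)))*(A i j * q j)
              + (2*G*(q i)*(G*w i - II*q i))*(w j * q j)) :=
        Finset.sum_congr rfl fun j _ => by rw [hMval]; ring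
      rw [step, Finset.sum_add_distrib, Finset.sum_add_distrib, Finset.sum_add_distrib,
        Finset.sum_add_distrib, Finset.sum_add_distrib,
        ← Finset.mul_sum, ← Finset.mul_sum, ← Finset.mul_sum, ← Finset.mul_sum,
        ← Finset.mul_sum, ← Finset.mul_sum, hwA i, ← hIw, ← hB, ← hG]
    have hS3 : ∑ i, (G*w i - II*q i)^2 = G^2*B - G*II^2 := by
      have step : ∑ i, (G*w i - II*q i)^2
          = ∑ i, (G^2*(w i)^2 + (-(2*G*II))*(w i * q i) + II^2*(q i)^2) :=
        Finset.sum_congr rfl fun i _ => by ring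
      rw [step, Finset.sum_add_distrib, Finset.sum_add_distrib,
        ← Finset.mul_sum, ← Finset.mul_sum, ← Finset.mul_sum, ← hB, ← hIw, ← hG]
      ring
    have hS4 : ∑ i, q i * (∑ j, A i j * w j) = B := by
      calc ∑ i, q i * ∑ j, A i j * w j = ∑ i, ∑ j, (A i j * q i) * w j := by
            refine Finset.sum_congr rfl fun i _ => ?_
            rw [Finset.mul_sum]
            exact Finset.sum_congr rfl fun j _ => by ring
        _ = ∑ j, ∑ i, (A i j * q i) * w j := Finset.sum_comm
        _ = ∑ j, (∑ i, A i j * q i) * w j :=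
            Finset.sum_congr rfl fun j _ => (Finset.sum_mul _ _ _).symm
        _ = ∑ j, w j * w j := Finset.sum_congr rfl fun j _ => by rw [hwA' j]
        _ = B := by rw [hB]; exact Finset.sum_congr rfl fun j _ => (sq (w j)).symm
    have hS5 : ∑ i, (G*w i - II*q i)*(w i) = G*B - II*II := by
      have step : ∑ i, (G*w i - II*q i)*(w i)
          = ∑ i, (G*(w i)^2 + (-II)*(w i * q i)) :=
        Finset.sum_congr rfl fun i _ => by ring
      rw [step, Finset.sum_add_distrib, ← Finset.mul_sum, ← Finset.mul_sum, ← hB, ← hIw]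
      ring
    have hS6 : ∑ i, (q i)*(G*w i - II*q i) = 0 := by
      have step : ∑ i, (q i)*(G*w i - II*q i)
          = ∑ i, (G*(w i * q i) + (-II)*(q i)^2) :=
        Finset.sum_congr rfl fun i _ => by ring
      rw [step, Finset.sum_add_distrib, ← Finset.mul_sum, ← Finset.mul_sum, ← hIw, ← hG]
      ring
    have hMsq : Msq = G^2*(H*G^2 - 2*B*G + II^2) := by
      have step : ∑ i, ∑ j, (M i j)^2
          = ∑ i, (G^4*(∑ j, (A i j)^2) + (G^2*B)*(q i)^2 + G*((G*w i - II*q i)^2)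
              + (-(2*G^3))*(q i * (∑ j, A i j * w j))
              + (-(2*G^2))*((G*w i - II*q i)*(w i))
              + (2*G*II)*((q i)*(G*w i - II*q i))) :=
        Finset.sum_congr rfl fun i _ => by rw [inner1 i]; ring
      rw [hMsqdef, step, Finset.sum_add_distrib, Finset.sum_add_distrib,
        Finset.sum_add_distrib, Finset.sum_add_distrib, Finset.sum_add_distrib,
        ← Finset.mul_sum, ← Finset.mul_sum, ← Finset.mul_sum, ← Finset.mul_sum,
        ← Finset.mul_sum, ← Finset.mul_sum, ← hH, ← hG, hS3, hS4, hS5, hS6]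
      ring
    have hPt : ∀ c : ℝ, (τ + c*G)^2 ≤ (n:ℝ)*(Msq + c^2*G^2) := by
      intro c
      set P : Fin n → Fin n → ℝ := fun i j => M i j + c*(q i * q j) with hP
      have hPval : ∀ i j, P i j = M i j + c*(q i * q j) := fun i j => by rw [hP]
      have h1 : (∑ i, P i i)^2 ≤ (n:ℝ) * ∑ i, (P i i)^2 := by
        have h := sq_sum_le_card_mul_sum_sq (s := (Finset.univ : Finset (Fin n)))
          (f := fun i => P i i)
        simpa using h
      have h2 : ∑ i, (P i i)^2 ≤ ∑ i, ∑ j, (P i j)^2 :=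
        Finset.sum_le_sum fun i _ =>
          Finset.single_le_sum (f := fun j => (P i j)^2) (fun j _ => sq_nonneg _)
            (Finset.mem_univ i)
      have h3 : ∑ i, P i i = τ + c*G := by
        have step : ∑ i, P i i = ∑ i, (M i i + c*(q i)^2) :=
          Finset.sum_congr rfl fun i _ => by rw [hPval]; ring
        rw [step, Finset.sum_add_distrib, ← Finset.mul_sum, ← hτs, ← hG]
      have h4 : ∑ i, ∑ j, (P i j)^2 = Msq + c^2*G^2 := by
        have inner : ∀ i, ∑ j, (P i j)^2
            = (∑ j, (M i j)^2) + (2*c*q i)*(∑ j, M i j * q j)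
              + (c^2*(q i)^2)*(∑ j, (q j)^2) := by
          intro i
          have step : ∑ j, (P i j)^2
              = ∑ j, ((M i j)^2 + (2*c*q i)*(M i j * q j) + (c^2*(q i)^2)*(q j)^2) :=
            Finset.sum_congr rfl fun j _ => by rw [hPval]; ring
          rw [step, Finset.sum_add_distrib, Finset.sum_add_distrib,
            ← Finset.mul_sum, ← Finset.mul_sum]
        calc ∑ i, ∑ j, (P i j)^2 = ∑ i, ((∑ j, (M i j)^2) + (c^2*G)*(q i)^2) := by
              refine Finset.sum_congr rfl fun i _ => ?_
              rw [inner i, hMq i, ← hG]; ring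
          _ = Msq + c^2*G^2 := by
              rw [Finset.sum_add_distrib, ← Finset.mul_sum, ← hMsqdef, ← hG]; ring
      calc (τ + c*G)^2 = (∑ i, P i i)^2 := by rw [h3]
        _ ≤ (n:ℝ)*∑ i, (P i i)^2 := h1
        _ ≤ (n:ℝ)*∑ i, ∑ j, (P i j)^2 :=
            mul_le_mul_of_nonneg_left h2 (by positivity)
        _ = (n:ℝ)*(Msq + c^2*G^2) := by rw [h4]
      done
    have hν : (0:ℝ) < (n:ℝ) - 1 := by linarith
    have hGne : G ≠ 0 := ne_of_gt hGpos
    have hνne : ((n:ℝ) - 1) ≠ 0 := ne_of_gt hν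
    have htr : τ^2 ≤ ((n:ℝ)-1) * Msq := by
      have h5 := hPt (τ / (((n:ℝ)-1)*G))
      have e1 : τ / (((n:ℝ)-1)*G) * G = τ/((n:ℝ)-1) := by field_simp
      have e2 : (τ / (((n:ℝ)-1)*G))^2 * G^2 = τ^2/((n:ℝ)-1)^2 := by
        field_simp
      rw [e1, e2] at h5
      have h6 := mul_le_mul_of_nonneg_left h5 (sq_nonneg ((n:ℝ)-1))
      have e3 : ((n:ℝ)-1)^2 * ((τ + τ/((n:ℝ)-1))^2) = ((n:ℝ)*τ)^2 := by
        field_simp; ring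
      have e4 : ((n:ℝ)-1)^2 * ((n:ℝ)*(Msq + τ^2/((n:ℝ)-1)^2))
          = (n:ℝ)*((n:ℝ)-1)^2*Msq + (n:ℝ)*τ^2 := by
        field_simp
      rw [e3, e4] at h6
      nlinarith [h6, hν, mul_pos (by linarith : (0:ℝ) < (n:ℝ)) hν]
    have f4 : (G*L - II)^2 ≤ ((n:ℝ)-1)*(H*G^2 - 2*B*G + II^2) := by
      have h7 : G^2*((G*L-II)^2) ≤ G^2*(((n:ℝ)-1)*(H*G^2 - 2*B*G + II^2)) := by
        have e : G^2*((G*L-II)^2) = τ^2 := by rw [hτ]; ring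
        have e' : G^2*(((n:ℝ)-1)*(H*G^2 - 2*B*G + II^2)) = ((n:ℝ)-1)*Msq := by
          rw [hMsq]; ring
        rw [e, e']; exact htr
      exact (mul_le_mul_iff_right₀ hG2).mp h7
    have hR' : 0 ≤ H*G^2 - 2*B*G + II^2 := by
      have h8 : 0 ≤ G^2*(H*G^2 - 2*B*G + II^2) := hMsq ▸ hMsq0
      nlinarith [h8, hG2]
    have hssG : 0 ≤ s^2 - G*s := by nlinarith [mul_le_mul_of_nonneg_right hs hspos.le]
    have hGsG : 0 ≤ G*s - G^2 := by nlinarith [mul_le_mul_of_nonneg_left hs hG0]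
    have c1 : 0 ≤ ((n:ℝ)-2)*(B*G)*(s^2 - G*s) :=
      mul_nonneg (mul_nonneg (by linarith) (mul_nonneg hB0 hG0)) hssG
    have c2 : 0 ≤ ((n:ℝ)-2)*(H*G^2-2*B*G+II^2)*(s^2-G*s) :=
      mul_nonneg (mul_nonneg (by linarith) hR') hssG
    have c3 : 0 ≤ ((n:ℝ)-2)*(B*G - II^2)*s^2 :=
      mul_nonneg (mul_nonneg (by linarith) (by linarith [f1])) (sq_nonneg s)
    have c4 : 0 ≤ (G*s)*(((n:ℝ)-1)*(H*G^2-2*B*G+II^2) - (G*L-II)^2) :=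
      mul_nonneg (mul_nonneg hG0 hspos.le) (by linarith [f4])
    have c5 : 0 ≤ (n:ℝ)*(B*G-II^2)*(G*s) :=
      mul_nonneg (mul_nonneg (by positivity) (by linarith [f1])) (mul_nonneg hG0 hspos.le)
    have c6 : 0 ≤ (n:ℝ)*II^2*(G*s - G^2) :=
      mul_nonneg (mul_nonneg (by positivity) (sq_nonneg II)) hGsG
    have main2 : G^2*((n:ℝ)*II^2)
        ≤ G^2*(((n:ℝ)-2)*H*s^2 + 2*L*II*s + G*s*(H - L^2)) := by
      linarith [c1, c2, c3, c4, c5, c6]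
    have main := (mul_le_mul_iff_right₀ hG2).mp main2
    linarith [main]

lemma key_wrap {n : ℕ} (hn : 2 ≤ n) (f : (Fin n → ℝ) → ℝ) (x : Fin n → ℝ)
    (hsym : ∀ i j, hess f i j x = hess f j i x) (s : ℝ) (hs : gradSq f x ≤ s) :
    (n : ℝ) * (infLap f x) ^ 2 ≤
      ((n : ℝ) - 2) * (hessSq f x) * s^2 + 2 * (lap f x) * (infLap f x) * s
        + (gradSq f x) * s * (hessSq f x - (lap f x)^2) := by
  have h := key_pure hn (fun i j => hess f i j x) (fun i => pd f i x) hsym s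
    (by simpa [gradSq] using hs)
  simpa [gradSq, hessSq, lap, infLap] using h

theorem pointwise_inequality_3_3
    (n : ℕ) (hn : 2 ≤ n) (ε : ℝ) (hε : 0 < ε) (p : ℝ) (hp : 1 < p)
    (u : (Fin n → ℝ) → ℝ → ℝ) (x : Fin n → ℝ) (t : ℝ)
    (hx1 : DifferentiableAt ℝ (fun y => u y t) x)
    (hx2 : ∀ j, DifferentiableAt ℝ (pd (fun y => u y t) j) x)
    (ht : DifferentiableAt ℝ (u x) t)
    (hsym : ∀ i j, hess (fun y => u y t) i j x = hess (fun y => u y t) j i x)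
    (heq : tderiv u x t = lap (fun y => u y t) x +
        (p - 2) * infLap (fun y => u y t) x / (gradSq (fun y => u y t) x + ε)) :
    ((n : ℝ) / 2 + (p - 2) - ((n : ℝ) - 2) / 2 * (p - 2) ^ 2) * hessSq (fun y => u y t) x
        + (n : ℝ) / 2 * (tderiv u x t) ^ 2
      ≤ ((n : ℝ) / 2 + (p - 2) + (1 / 2) * (p - 2) ^ 2) *
          (hessSq (fun y => u y t) x - (lap (fun y => u y t) x) ^ 2)
        + ε / 2 * (p - 2) ^ 2 *
            ((lap (fun y => u y t) x) ^ 2 - hessSq (fun y => u y t) x) /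
            (gradSq (fun y => u y t) x + ε)
        + (p - 2 + n) * lap (fun y => u y t) x * tderiv u x t := by
  have hG0 : 0 ≤ gradSq (fun y => u y t) x :=
    Finset.sum_nonneg fun i _ => sq_nonneg _
  have hkey := key_wrap hn (fun y => u y t) x hsym (gradSq (fun y => u y t) x + ε)
    (by linarith)
  set H := hessSq (fun y => u y t) x with hH
  set L := lap (fun y => u y t) x with hL
  set II := infLap (fun y => u y t) x with hII
  set G := gradSq (fun y => u y t) x with hGd
  have hs : (0:ℝ) < G + ε := by linarith
  rw [heq]
  rw [← sub_nonneg]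
  have key2 : 0 ≤ ((p-2)^2 * (((n:ℝ)-2)*H*(G+ε)^2 + 2*L*II*(G+ε) + G*(G+ε)*(H-L^2)
      - (n:ℝ)*II^2)) / (2*(G+ε)^2) :=
    div_nonneg (mul_nonneg (sq_nonneg _) (by linarith [hkey])) (by positivity)
  refine le_trans key2 (le_of_eq ?_)
  field_simp
  ring
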